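/- Let p > 2 be prime and δ = p - 1, n = p. A partition λ with |λ| ≤ p satisfies Γ_δ(λ,p) = Γ_δ(∅,p) = (1,1,...,1,2) if and only if λ has empty p-core (equivalently, λ = ∅ or λ is a hook partition of p). -/

import Mathlib

/-- A partition: a weakly decreasing, finitely supported sequence of non-negative integers.
`parts i` is the `(i+1)`-st part `λ_{i+1}` (rows are 0-indexed in Lean). -/
structure Partn where
  parts : ℕ → ℕ
  antitone : Antitone parts
  finite_support : (Function.support parts).Finite

/-- The size `|λ|` of a partition. -/
noncomputable def Partn.size (l : Partn) : ℕ := ∑ᶠ i, l.parts i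

/-- `Γ(λ,b)_i`: the number of beads of the abacus of `λ` with `b` beads and `p` runners
lying on runner `i`; bead `j` (for `j = 0, …, b-1`) sits in position
`β(λ,b)_j = λ_{j+1} - (j+1) + b`. -/
def Gamma (p : ℕ) (l : Partn) (b : ℕ) (i : ℕ) : ℕ :=
  (Finset.univ.filter fun j : Fin b => (l.parts j + (b - (j + 1))) % p = i).card

/-- The runner-count vector `Γ_δ(λ,b)` of the `δ`-marked abacus: the bead counts `Γ(λ,b)`,
with an extra `1` added on the marked runner `v_λ ≡ δ - |λ| + b (mod p)`. -/
noncomputable def GammaDelta (p : ℕ) (δ : ℤ) (l : Partn) (b : ℕ) (i : ℕ) : ℕ :=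
  Gamma p l b i + if (δ - (l.size : ℤ) + b) % p = i then 1 else 0

/-- `λ` is the hook partition `(p-m, 1^m)` of `p`. -/
def IsHook (p m : ℕ) (l : Partn) : Prop :=
  l.parts 0 = p - m ∧ (∀ i, 1 ≤ i → i ≤ m → l.parts i = 1) ∧ ∀ i, m < i → l.parts i = 0

lemma mod2p {p : ℕ} (hp : 0 < p) (x : ℕ) (hx : x < 2 * p) :
    x % p = if x < p then x else x - p := by
  split_ifs with h
  · exact Nat.mod_eq_of_lt h
  · rw [Nat.mod_eq_sub_mod (by omega)]
    exact Nat.mod_eq_of_lt (by omega)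

lemma Partn.sum_range_le (l : Partn) (n : ℕ) : ∑ j ∈ Finset.range n, l.parts j ≤ l.size := by
  classical
  have h := l.finite_support
  rw [Partn.size, finsum_eq_sum_of_support_subset _ (s := h.toFinset ∪ Finset.range n)
    (by intro x hx
        simp only [Finset.coe_union, Set.mem_union, Finset.mem_coe, Set.Finite.mem_toFinset]
        exact Or.inl hx)]
  exact Finset.sum_le_sum_of_subset Finset.subset_union_right

lemma Partn.parts_le_size (l : Partn) (j : ℕ) : l.parts j ≤ l.size :=
  le_trans (Finset.single_le_sum (f := l.parts) (fun _ _ => Nat.zero_le _)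
    (Finset.self_mem_range_succ j)) (Partn.sum_range_le l (j+1))

lemma fiber_card {p : ℕ} (g : Fin p → Fin p) (hg : Function.Injective g) (i : Fin p) :
    (Finset.univ.filter fun j => g j = i).card = 1 := by
  have hbij : Function.Bijective g := (Fintype.bijective_iff_injective_and_card g).2 ⟨hg, rfl⟩
  obtain ⟨a, ha⟩ := hbij.2 i
  rw [show (Finset.univ.filter fun j => g j = i) = {a} from ?_, Finset.card_singleton]
  ext b
  simp only [Finset.mem_filter, Finset.mem_univ, true_and, Finset.mem_singleton]
  constructor
  · intro hb; exact hg (hb.trans ha.symm)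
  · rintro rfl; exact ha

def gfun (p : ℕ) (hp : 0 < p) (l : Partn) (j : Fin p) : Fin p :=
  ⟨(l.parts ↑j + (p - (↑j + 1))) % p, Nat.mod_lt _ hp⟩

lemma gamma_fiber (p : ℕ) (hp : 0 < p) (l : Partn) (i : ℕ) (hi : i < p) :
    Gamma p l p i = (Finset.univ.filter fun j => gfun p hp l j = ⟨i, hi⟩).card := by
  unfold Gamma gfun
  congr 1
  ext j
  simp [Fin.ext_iff]

lemma gamma_of_inj (p : ℕ) (hp : 0 < p) (l : Partn)
    (hg : Function.Injective (gfun p hp l)) : ∀ i, i < p → Gamma p l p i = 1 := by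
  intro i hi
  rw [gamma_fiber p hp l i hi]
  exact fiber_card _ hg _

lemma inj_of_gamma (p : ℕ) (hp : 0 < p) (l : Partn)
    (h : ∀ i, i < p → Gamma p l p i = 1) : Function.Injective (gfun p hp l) := by
  intro a b hab
  have h1 := h (gfun p hp l a).val (gfun p hp l a).isLt
  rw [gamma_fiber p hp l _ (gfun p hp l a).isLt] at h1
  exact Finset.card_le_one.1 h1.le a
    (Finset.mem_filter.2 ⟨Finset.mem_univ _, rfl⟩) b
    (Finset.mem_filter.2 ⟨Finset.mem_univ _, hab.symm⟩)

lemma gfun_val (p : ℕ) (hp : 0 < p) (l : Partn) (j : Fin p) :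
    (gfun p hp l j : ℕ) = (l.parts ↑j + (p - (↑j + 1))) % p := rfl

lemma inj_empty (p : ℕ) (hp : 0 < p) (l : Partn) (h0 : ∀ i, l.parts i = 0) :
    Function.Injective (gfun p hp l) := by
  intro a b hab
  have ha := a.isLt; have hb := b.isLt
  have h := congrArg Fin.val hab
  simp only [gfun, h0, Nat.zero_add] at h
  rw [Nat.mod_eq_of_lt (by omega), Nat.mod_eq_of_lt (by omega)] at h
  exact Fin.ext (by omega)

lemma hook_vals (p : ℕ) (hp : 0 < p) (l : Partn) (m : ℕ) (hm : m ≤ p - 1)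
    (h0 : l.parts 0 = p - m) (h1 : ∀ i, 1 ≤ i → i ≤ m → l.parts i = 1)
    (h2 : ∀ i, m < i → l.parts i = 0) :
    ∀ j : Fin p, (gfun p hp l j : ℕ) =
      if (j : ℕ) = 0 then p - 1 - m else if (j : ℕ) ≤ m then p - ↑j else p - 1 - ↑j := by
  intro j
  have hjp := j.isLt
  have hle : l.parts ↑j ≤ p - m := by rw [← h0]; exact l.antitone (Nat.zero_le _)
  rw [gfun_val, mod2p hp _ (by omega)]
  rcases Nat.lt_or_ge (j : ℕ) 1 with hj | hj
  · have hj0 : (j : ℕ) = 0 := by omega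
    rw [hj0, h0]
    split_ifs <;> omega
  · rcases le_or_gt (j : ℕ) m with hjm | hjm
    · rw [h1 ↑j hj hjm]; split_ifs <;> omega
    · rw [h2 ↑j hjm]; split_ifs <;> omega

lemma inj_hook (p : ℕ) (hp : 0 < p) (l : Partn) (m : ℕ) (hm : m ≤ p - 1)
    (h0 : l.parts 0 = p - m) (h1 : ∀ i, 1 ≤ i → i ≤ m → l.parts i = 1)
    (h2 : ∀ i, m < i → l.parts i = 0) :
    Function.Injective (gfun p hp l) := by
  intro a b hab
  have ha := a.isLt; have hb := b.isLt
  have h := congrArg Fin.val hab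
  rw [hook_vals p hp l m hm h0 h1 h2 a, hook_vals p hp l m hm h0 h1 h2 b] at h
  apply Fin.ext
  split_ifs at h <;> omega

lemma hook_size (p m : ℕ) (hp : 0 < p) (hm : m ≤ p - 1) (l : Partn)
    (h0 : l.parts 0 = p - m) (h1 : ∀ i, 1 ≤ i → i ≤ m → l.parts i = 1)
    (h2 : ∀ i, m < i → l.parts i = 0) : l.size = p := by
  classical
  rw [Partn.size, finsum_eq_sum_of_support_subset _ (s := Finset.range (m+1)) ?_]
  · rw [Finset.sum_range_succ' l.parts m, h0]
    have hone : ∑ x ∈ Finset.range m, l.parts (x+1) = m := by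
      rw [Finset.sum_congr rfl (fun x hx => h1 (x+1) (by omega)
        (by have := Finset.mem_range.1 hx; omega))]
      simp
    rw [hone]; omega
  · intro x hx
    simp only [Function.mem_support] at hx
    simp only [Finset.coe_range, Set.mem_Iio]
    by_contra hc
    exact hx (h2 x (by omega))

lemma empty_size (l : Partn) (h0 : ∀ i, l.parts i = 0) : l.size = 0 := by
  rw [Partn.size]
  exact finsum_eq_zero_of_forall_eq_zero h0

lemma gamma_to_shape (p : ℕ) (hp2 : 2 < p) (l : Partn) (hl : l.size ≤ p)
    (h : ∀ i, i < p → Gamma p l p i = 1) :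
    (∀ i, l.parts i = 0) ∨ ∃ m, m ≤ p - 1 ∧ IsHook p m l := by
  classical
  have hp : 0 < p := by omega
  have hg := inj_of_gamma p hp l h
  set f : ℕ → ℕ := fun j => l.parts j + (p - (j + 1)) with hf
  have hple : ∀ j : ℕ, l.parts j ≤ p := fun j => (l.parts_le_size j).trans hl
  have hflt : ∀ j : ℕ, f j < 2 * p := by
    intro j
    simp only [hf]
    have := hple j
    omega
  -- sum of residues equals sum of 0..p-1
  have hres : ∑ j ∈ Finset.range p, f j % p = ∑ j ∈ Finset.range p, j := by
    have hbij : Function.Bijective (gfun p hp l) :=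
      (Fintype.bijective_iff_injective_and_card _).2 ⟨hg, rfl⟩
    have hc := Equiv.sum_comp (Equiv.ofBijective _ hbij) (fun i : Fin p => (i : ℕ))
    rw [← Fin.sum_univ_eq_sum_range (fun j => f j % p) p,
        ← Fin.sum_univ_eq_sum_range (fun j => j) p, ← hc]
    rfl
  have hsplit : ∑ j ∈ Finset.range p, f j
      = p * (∑ j ∈ Finset.range p, f j / p) + ∑ j ∈ Finset.range p, f j % p := by
    rw [Finset.mul_sum, ← Finset.sum_add_distrib]
    exact Finset.sum_congr rfl fun j _ => (Nat.div_add_mod (f j) p).symm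
  have hfsum : ∑ j ∈ Finset.range p, f j
      = (∑ j ∈ Finset.range p, l.parts j) + ∑ j ∈ Finset.range p, j := by
    have hrefl : ∑ j ∈ Finset.range p, (p - (j+1)) = ∑ j ∈ Finset.range p, j := by
      rw [Finset.sum_congr rfl (fun j _ => (by omega : p - (j+1) = p - 1 - j))]
      exact Finset.sum_range_reflect (fun i => i) p
    rw [← hrefl, ← Finset.sum_add_distrib]
  have hA : ∑ j ∈ Finset.range p, l.parts j = p * (∑ j ∈ Finset.range p, f j / p) := by
    omega
  have hAle : ∑ j ∈ Finset.range p, l.parts j ≤ p := (l.sum_range_le p).trans hl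
  have hK1 : ∑ j ∈ Finset.range p, f j / p ≤ 1 := by
    by_contra hK
    push_neg at hK
    have h2p : p * 2 ≤ p * (∑ j ∈ Finset.range p, f j / p) := Nat.mul_le_mul_left p hK
    rw [← hA] at h2p
    omega
  rcases Nat.eq_zero_or_pos (∑ j ∈ Finset.range p, f j / p) with hK | hK
  · -- empty partition
    rw [hK, Nat.mul_zero] at hA
    have hz := Finset.sum_eq_zero_iff.1 hA
    left
    intro i
    have h00 : l.parts 0 = 0 := hz 0 (Finset.mem_range.2 hp)
    have := l.antitone (Nat.zero_le i)
    omega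
  · -- hook partition
    have hKeq : ∑ j ∈ Finset.range p, f j / p = 1 := le_antisymm hK1 hK
    rw [hKeq, Nat.mul_one] at hA
    -- no bead j ≥ 1 in the upper row
    have hq0 : ∀ j, 1 ≤ j → j < p → f j < p := by
      intro j hj hjp
      by_contra hfj
      push_neg at hfj
      have hf0 : p ≤ f 0 := by
        have hmono := l.antitone (Nat.zero_le j)
        simp only [hf] at hfj ⊢
        omega
      have hq01 : 1 ≤ f 0 / p := (Nat.one_le_div_iff hp).2 hf0
      have hqj1 : 1 ≤ f j / p := (Nat.one_le_div_iff hp).2 hfj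
      have hsub : ({0, j} : Finset ℕ) ⊆ Finset.range p := by
        intro x hx
        simp only [Finset.mem_insert, Finset.mem_singleton] at hx
        rcases hx with rfl | rfl <;> simp [Finset.mem_range] <;> omega
      have hle2 := Finset.sum_le_sum_of_subset (f := fun j => f j / p) hsub
      rw [Finset.sum_pair (by omega : (0:ℕ) ≠ j)] at hle2
      have hle2' : f 0 / p + f j / p ≤ ∑ j ∈ Finset.range p, f j / p := hle2
      omega
    have hp0pos : 1 ≤ l.parts 0 := by
      by_contra hc
      push_neg at hc
      have hzz : ∑ j ∈ Finset.range p, l.parts j = 0 :=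
        Finset.sum_eq_zero fun j _ => by have := l.antitone (Nat.zero_le j); omega
      omega
    have h1le : l.parts 1 ≤ 1 := by
      have := hq0 1 le_rfl (by omega)
      simp only [hf] at this
      omega
    have hparts_le1 : ∀ j, 1 ≤ j → l.parts j ≤ 1 := fun j hj =>
      le_trans (l.antitone hj) h1le
    have hp0le := hple 0
    refine Or.inr ⟨p - l.parts 0, by omega, by omega, ?_, ?_⟩
    · -- parts i = 1 for 1 ≤ i ≤ m
      intro i h1i him
      by_contra hc
      have hi0 : l.parts i = 0 := by have := hparts_le1 i h1i; omega
      have hip : i < p := by omega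
      have hdec : (∑ t ∈ Finset.Ico 0 i, l.parts t) + ∑ t ∈ Finset.Ico i p, l.parts t
          = ∑ t ∈ Finset.Ico 0 p, l.parts t :=
        Finset.sum_Ico_consecutive _ (Nat.zero_le i) (le_of_lt hip)
      have hz2 : ∑ t ∈ Finset.Ico i p, l.parts t = 0 :=
        Finset.sum_eq_zero fun t ht => by
          have := l.antitone (Finset.mem_Ico.1 ht).1
          omega
      have hdec2 : (∑ t ∈ Finset.Ico 0 1, l.parts t) + ∑ t ∈ Finset.Ico 1 i, l.parts t
          = ∑ t ∈ Finset.Ico 0 i, l.parts t :=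
        Finset.sum_Ico_consecutive _ (Nat.zero_le 1) (by omega)
      have h01 : ∑ t ∈ Finset.Ico 0 1, l.parts t = l.parts 0 := by
        rw [← Finset.range_eq_Ico, Finset.sum_range_one]
      have hb : ∑ t ∈ Finset.Ico 1 i, l.parts t ≤ i - 1 := by
        have := Finset.sum_le_card_nsmul (Finset.Ico 1 i) l.parts 1
          (fun t ht => hparts_le1 t (Finset.mem_Ico.1 ht).1)
        simpa [Nat.card_Ico] using this
      rw [Finset.range_eq_Ico] at hA
      omega
    · -- parts i = 0 for i > m
      intro i hmi
      by_contra hc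
      have hip : 1 ≤ l.parts i := by omega
      have hsum_le : ∑ t ∈ Finset.range (i+1), l.parts t ≤ p := (l.sum_range_le (i+1)).trans hl
      have hdecomp : ∑ t ∈ Finset.range (i+1), l.parts t
          = (∑ t ∈ Finset.range i, l.parts (t+1)) + l.parts 0 :=
        Finset.sum_range_succ' l.parts i
      have hlow : i ≤ ∑ t ∈ Finset.range i, l.parts (t+1) := by
        calc i = ∑ _t ∈ Finset.range i, 1 := by simp
        _ ≤ ∑ t ∈ Finset.range i, l.parts (t+1) :=
          Finset.sum_le_sum fun t ht => le_trans hip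
            (l.antitone (by have := Finset.mem_range.1 ht; omega))
      omega

/-- Let `p > 2` be prime, `δ = p - 1`, `n = p`. A partition `λ` with
`|λ| ≤ p` satisfies `Γ_δ(λ,p) = Γ_δ(∅,p) = (1,…,1,2)` if and only if `λ` has empty
`p`-core, equivalently `λ = ∅` or `λ` is a hook partition of `p`. -/
theorem markedAbacus_eq_iff_empty_pCore
    (p : ℕ) (hp : p.Prime) (hp2 : 2 < p) (l : Partn) (hl : l.size ≤ p) :
    ((∀ i, i < p → GammaDelta p ((p : ℤ) - 1) l p i = if i = p - 1 then 2 else 1) ↔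
      (∀ i, i < p → Gamma p l p i = 1)) ∧
    ((∀ i, i < p → Gamma p l p i = 1) ↔
      ((∀ i, l.parts i = 0) ∨ ∃ m, m ≤ p - 1 ∧ IsHook p m l)) := by
  have hp0 : 0 < p := by omega
  have hple : ∀ j : ℕ, l.parts j ≤ p := fun j => (l.parts_le_size j).trans hl
  have main2 : (∀ i, i < p → Gamma p l p i = 1) ↔
      ((∀ i, l.parts i = 0) ∨ ∃ m, m ≤ p - 1 ∧ IsHook p m l) := by
    constructor
    · exact gamma_to_shape p hp2 l hl
    · rintro (h0 | ⟨m, hm, h0, h1, h2⟩)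
      · exact gamma_of_inj p hp0 l (inj_empty p hp0 l h0)
      · exact gamma_of_inj p hp0 l (inj_hook p hp0 l m hm h0 h1 h2)
  refine ⟨⟨?_, ?_⟩, main2⟩
  · -- GammaDelta condition → Gamma all ones
    intro H
    by_cases hv : ((p:ℤ) - 1 - (l.size:ℤ) + p) % p = (p:ℤ) - 1
    · intro i hi
      have hH := H i hi
      simp only [GammaDelta] at hH
      rw [hv] at hH
      by_cases hc : i = p - 1
      · rw [if_pos (show (p:ℤ) - 1 = (i:ℤ) by omega), if_pos hc] at hH
        omega
      · rw [if_neg (show ¬((p:ℤ) - 1 = (i:ℤ)) from fun hcc => hc (by omega)),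
          if_neg hc] at hH
        omega
    · exfalso
      have hH := H (p-1) (by omega)
      simp only [GammaDelta] at hH
      have hcast : (((p-1:ℕ)):ℤ) = (p:ℤ) - 1 := by omega
      rw [if_neg (show ¬(((p:ℤ) - 1 - (l.size:ℤ) + p) % p = ((p-1:ℕ):ℤ)) from
            fun hcc => hv (by rw [hcast] at hcc; exact hcc))] at hH
      simp only [eq_self_iff_true, if_true, Nat.add_zero] at hH
      have hG2 : Gamma p l p (p-1) = 2 := hH
      unfold Gamma at hG2
      obtain ⟨a, ha, b, hb, hab⟩ := Finset.one_lt_card.1 (by omega : 1 <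
        (Finset.univ.filter fun j : Fin p =>
          (l.parts ↑j + (p - (↑j + 1))) % p = p - 1).card)
      have ha' := (Finset.mem_filter.1 ha).2
      have hb' := (Finset.mem_filter.1 hb).2
      have hne : l.parts ↑a + (p - (↑a+1)) ≠ l.parts ↑b + (p - (↑b+1)) := by
        intro he
        apply hab
        apply Fin.ext
        have hap := a.isLt; have hbp := b.isLt
        rcases lt_trichotomy (a:ℕ) (b:ℕ) with hlt | heq | hlt
        · have := l.antitone (le_of_lt hlt); omega
        · exact heq
        · have := l.antitone (le_of_lt hlt); omega
      have key : ∀ c : Fin p, (l.parts ↑c + (p - (↑c+1))) % p = p - 1 →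
          l.parts ↑c + (p - (↑c+1)) = p - 1 ∨ ((c:ℕ) = 0 ∧ l.parts ↑c = p) := by
        intro c hcnd
        have hcp := c.isLt
        have hcle := hple (↑c)
        rw [mod2p hp0 _ (by omega)] at hcnd
        split_ifs at hcnd with hcc
        · left; omega
        · right; constructor <;> omega
      have hone : ∃ c : Fin p, (c:ℕ) = 0 ∧ l.parts ↑c = p := by
        rcases key a ha' with hka | hka
        · rcases key b hb' with hkb | hkb
          · exact absurd (hka.trans hkb.symm) hne
          · exact ⟨b, hkb⟩
        · exact ⟨a, hka⟩
      obtain ⟨c, hc0, hcp⟩ := hone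
      rw [hc0] at hcp
      have hps := l.parts_le_size 0
      have hsz : l.size = p := by omega
      apply hv
      rw [hsz, show (p:ℤ) - 1 - (p:ℤ) + p = (p:ℤ) - 1 by ring]
      exact Int.emod_eq_of_lt (by omega) (by omega)
  · -- Gamma all ones → GammaDelta condition
    intro H i hi
    have hsz : l.size = 0 ∨ l.size = p := by
      rcases main2.1 H with h0 | ⟨m, hm, h0, h1, h2⟩
      · exact Or.inl (empty_size l h0)
      · exact Or.inr (hook_size p m hp0 hm l h0 h1 h2)
    have hv : ((p:ℤ) - 1 - (l.size:ℤ) + p) % p = (p:ℤ) - 1 := by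
      have e1 : ((p:ℤ) - 1) % p = (p:ℤ) - 1 := Int.emod_eq_of_lt (by omega) (by omega)
      rcases hsz with h | h <;> rw [h]
      · rw [show (p:ℤ) - 1 - ((0:ℕ):ℤ) + p = ((p:ℤ) - 1) + p by push_cast; ring,
          Int.add_emod_right]
        exact e1
      · rw [show (p:ℤ) - 1 - ((p:ℕ):ℤ) + p = (p:ℤ) - 1 by push_cast; ring]
        exact e1
    have hg := H i hi
    simp only [GammaDelta]
    rw [hv, hg]
    by_cases hc : i = p - 1
    · rw [if_pos (show (p:ℤ) - 1 = (i:ℤ) by omega), if_pos hc]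
    · rw [if_neg (show ¬((p:ℤ) - 1 = (i:ℤ)) from fun hcc => hc (by omega)), if_neg hc]
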